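/- Expected determinant under leverage score sampling: let x ~ D_X with second moment Sigma, and define the leverage-score measure Lev with density l(x)/tr(Sigma Sigma_hat^{-1}) relative to D_X, where l(x) = x^T Sigma_hat^{-1} x. If x_1,...,x_t are i.i.d. from Lev and x~_i = sqrt(d/l(x_i)) x_i, Sigma~ = (1/t) sum_i x~_i x~_i^T, then E[det(Sigma~ Sigma_hat^{-1})] >= (1 - d^2/t) * det(Sigma Sigma_hat^{-1}) / (tr(Sigma Sigma_hat^{-1})/d)^d. -/

import Mathlib

open MeasureTheory Matrix

lemma aux_integral_pi_prod {E : Type*} [MeasurableSpace E] (ν : Measure E) [SigmaFinite ν]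
    {ι : Type*} [Fintype ι] (f : ι → E → ℝ) :
    ∫ x : ι → E, ∏ i, f i (x i) ∂(Measure.pi fun _ => ν) = ∏ i, ∫ x, f i x ∂ν := by
  letI : MeasureSpace E := ⟨ν⟩
  have h : (Measure.pi fun _ : ι => ν) = (volume : Measure (ι → E)) := volume_pi.symm
  rw [h]
  exact MeasureTheory.integral_fintype_prod_volume_eq_prod f

lemma aux_integrable_pi_prod {E : Type*} [MeasurableSpace E] (ν : Measure E) [SigmaFinite ν]
    {ι : Type*} [Fintype ι] (f : ι → E → ℝ) (hf : ∀ i, Integrable (f i) ν) :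
    Integrable (fun x : ι → E => ∏ i, f i (x i)) (Measure.pi fun _ => ν) := by
  letI : MeasureSpace E := ⟨ν⟩
  have h : (Measure.pi fun _ : ι => ν) = (volume : Measure (ι → E)) := volume_pi.symm
  rw [h]
  exact MeasureTheory.Integrable.fintype_prod hf

lemma aux_bernoulli (s : Finset ℕ) (a : ℕ → ℝ) (h0 : ∀ k ∈ s, 0 ≤ a k)
    (h1 : ∀ k ∈ s, a k ≤ 1) :
    1 - ∑ k ∈ s, a k ≤ ∏ k ∈ s, (1 - a k) := by
  classical
  induction s using Finset.induction_on with
  | empty => simp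
  | @insert x s hx ih =>
    rw [Finset.sum_insert hx, Finset.prod_insert hx]
    have ha := h0 _ (Finset.mem_insert_self _ _)
    have hb := h1 _ (Finset.mem_insert_self _ _)
    have ih' := ih (fun k hk => h0 k (Finset.mem_insert_of_mem hk))
      (fun k hk => h1 k (Finset.mem_insert_of_mem hk))
    have hs0 : 0 ≤ ∑ k ∈ s, a k :=
      Finset.sum_nonneg fun k hk => h0 k (Finset.mem_insert_of_mem hk)
    nlinarith

/-- Expected determinant under i.i.d. leverage score sampling:
`E[det(Σ̃ Σ̂⁻¹)] ≥ (1 - d²/t) det(ΣΣ̂⁻¹) / (tr(ΣΣ̂⁻¹)/d)^d`. -/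
theorem stmt19 (d t : ℕ) (hd : 0 < d) (hdt : d ≤ t)
    (μ : Measure (Fin d → ℝ)) [IsProbabilityMeasure μ]
    (hint : ∀ i j : Fin d, Integrable (fun x => x i * x j) μ)
    (Sg : Matrix (Fin d) (Fin d) ℝ)
    (hSg : Sg = Matrix.of fun i j => ∫ x, x i * x j ∂μ)
    (hinv : IsUnit Sg.det)
    (Sh : Matrix (Fin d) (Fin d) ℝ) (hSh : Sh.PosDef) :
    (1 - (d : ℝ) ^ 2 / t) * (Sg * Sh⁻¹).det / ((Sg * Sh⁻¹).trace / d) ^ d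
      ≤ ∫ w : Fin t → (Fin d → ℝ),
          ((((1 : ℝ) / t) • ∑ i, ((d : ℝ) / (w i ⬝ᵥ (Sh⁻¹ *ᵥ w i))) •
              vecMulVec (w i) (w i)) * Sh⁻¹).det
        ∂(Measure.pi fun _ : Fin t =>
          μ.withDensity fun x =>
            ENNReal.ofReal ((x ⬝ᵥ (Sh⁻¹ *ᵥ x)) / (Sg * Sh⁻¹).trace)) := by
  classical
  have hdet : Sg.det ≠ 0 := hinv.ne_zero
  set Si := Sh⁻¹ with hSidef
  have hSi : Si.PosDef := hSh.inv
  -- basic facts about the quadratic form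
  have hl_nonneg : ∀ x : Fin d → ℝ, 0 ≤ x ⬝ᵥ (Si *ᵥ x) := fun x => by
    simpa using hSi.posSemidef.dotProduct_mulVec_nonneg x
  have hl_zero : ∀ x : Fin d → ℝ, x ⬝ᵥ (Si *ᵥ x) = 0 → x = 0 := by
    intro x hx
    by_contra h
    have := hSi.dotProduct_mulVec_pos h
    simp only [star_trivial] at this
    exact this.ne' hx
  have hSg_apply : ∀ a b, Sg a b = ∫ x, x a * x b ∂μ := fun a b => by rw [hSg]; rfl
  have hl_eq : ∀ x : Fin d → ℝ,
      x ⬝ᵥ (Si *ᵥ x) = ∑ a : Fin d, ∑ b : Fin d, Si a b * (x a * x b) := by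
    intro x
    simp only [dotProduct, mulVec, Finset.mul_sum]
    exact Finset.sum_congr rfl fun a _ => Finset.sum_congr rfl fun b _ => by ring
  have hl_meas : Measurable fun x : Fin d → ℝ => x ⬝ᵥ (Si *ᵥ x) := by
    simp only [hl_eq]
    exact Finset.measurable_sum _ fun a _ => Finset.measurable_sum _ fun b _ =>
      ((measurable_pi_apply a).mul (measurable_pi_apply b)).const_mul _
  have hl_int : Integrable (fun x => x ⬝ᵥ (Si *ᵥ x)) μ := by
    simp only [hl_eq]
    exact integrable_finset_sum _ fun a _ =>
      integrable_finset_sum _ fun b _ => (hint a b).const_mul _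
  set T := (Sg * Si).trace with hT
  have htr_eq : ∫ x, x ⬝ᵥ (Si *ᵥ x) ∂μ = T := by
    simp only [hl_eq]
    rw [show T = ∑ a : Fin d, ∑ b : Fin d, Sg a b * Si b a from
      Finset.sum_congr rfl fun a _ => Matrix.mul_apply]
    rw [integral_finset_sum Finset.univ (fun a _ => integrable_finset_sum Finset.univ fun b _ => (hint a b).const_mul (Si a b))]
    refine Finset.sum_congr rfl fun a _ => ?_
    rw [integral_finset_sum Finset.univ (fun b _ => (hint a b).const_mul (Si a b))]
    refine Finset.sum_congr rfl fun b _ => ?_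
    rw [integral_const_mul, ← hSg_apply]
    have hSisymm : Si a b = Si b a := by
      have := hSi.isHermitian
      conv_lhs => rw [← this]
      simp [Matrix.conjTranspose_apply]
    rw [hSisymm]; ring
  have hT_nonneg : 0 ≤ T := htr_eq ▸ integral_nonneg hl_nonneg
  have hNE : Nonempty (Fin d) := ⟨⟨0, hd⟩⟩
  have hT_pos : 0 < T := by
    rcases hT_nonneg.lt_or_eq with h | h
    · exact h
    · exfalso
      have hl0 : (fun x => x ⬝ᵥ (Si *ᵥ x)) =ᵐ[μ] 0 :=
        (integral_eq_zero_iff_of_nonneg hl_nonneg hl_int).mp (htr_eq.trans h.symm)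
      have hx0 : ∀ᵐ x ∂μ, x = 0 := hl0.mono fun x hx => hl_zero x hx
      have hSg0 : Sg = 0 := by
        ext a b
        rw [hSg_apply a b]
        have : (fun x : Fin d → ℝ => x a * x b) =ᵐ[μ] fun _ => 0 :=
          hx0.mono fun x hx => by rw [hx]; simp
        rw [integral_congr_ae this, integral_zero]
        rfl
      rw [hSg0, Matrix.det_zero] at hdet
      exact hdet rfl
  -- Sg is positive semidefinite, hence has positive determinant
  have hSg_psd : Sg.PosSemidef := by
    refine Matrix.posSemidef_iff_dotProduct_mulVec.mpr ⟨?_, ?_⟩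
    · ext a b
      rw [Matrix.conjTranspose_apply, star_trivial, hSg_apply, hSg_apply]
      exact integral_congr_ae (Filter.Eventually.of_forall fun x => mul_comm _ _)
    · intro v
      have hv : star v = v := star_trivial v
      rw [hv]
      have key : v ⬝ᵥ (Sg *ᵥ v) = ∫ x, (∑ a, v a * x a) ^ 2 ∂μ := by
        have hsq : ∀ x : Fin d → ℝ,
            (∑ a, v a * x a) ^ 2 = ∑ a : Fin d, ∑ b : Fin d, v a * v b * (x a * x b) := by
          intro x
          rw [sq, Finset.sum_mul_sum]
          exact Finset.sum_congr rfl fun a _ => Finset.sum_congr rfl fun b _ => by ring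
        calc v ⬝ᵥ (Sg *ᵥ v)
            = ∑ a : Fin d, ∑ b : Fin d, ∫ x, v a * v b * (x a * x b) ∂μ := by
              simp only [dotProduct, mulVec, Finset.mul_sum]
              refine Finset.sum_congr rfl fun a _ => Finset.sum_congr rfl fun b _ => ?_
              rw [integral_const_mul, hSg_apply]; ring
          _ = ∫ x, ∑ a : Fin d, ∑ b : Fin d, v a * v b * (x a * x b) ∂μ := by
              rw [integral_finset_sum _ (fun a _ =>
                integrable_finset_sum _ fun b _ => (hint a b).const_mul _)]
              exact Finset.sum_congr rfl fun a _ =>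
                (integral_finset_sum _ (fun b _ => (hint a b).const_mul _)).symm
          _ = ∫ x, (∑ a, v a * x a) ^ 2 ∂μ :=
              integral_congr_ae (Filter.Eventually.of_forall fun x => (hsq x).symm)
      rw [key]
      exact integral_nonneg fun x => sq_nonneg _
  have hSg_det_pos : 0 < Sg.det := by
    have h0 : 0 ≤ Sg.det := hSg_psd.det_nonneg
    exact h0.lt_of_ne' hdet
  set ν := μ.withDensity (fun x => ENNReal.ofReal ((x ⬝ᵥ (Si *ᵥ x)) / T)) with hν
  have hρ_meas : Measurable fun x : Fin d → ℝ => ENNReal.ofReal ((x ⬝ᵥ (Si *ᵥ x)) / T) :=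
    ENNReal.measurable_ofReal.comp (hl_meas.div_const T)
  have hρ_lt_top : ∀ᵐ x ∂μ, ENNReal.ofReal ((x ⬝ᵥ (Si *ᵥ x)) / T) < ⊤ :=
    Filter.Eventually.of_forall fun x => ENNReal.ofReal_lt_top
  haveI hν_prob : IsProbabilityMeasure ν := by
    constructor
    rw [hν, withDensity_apply _ MeasurableSet.univ, setLIntegral_univ]
    rw [← ofReal_integral_eq_lintegral_ofReal (hl_int.div_const T)
      (Filter.Eventually.of_forall fun x => div_nonneg (hl_nonneg x) hT_pos.le)]
    rw [integral_div, htr_eq, div_self hT_pos.ne', ENNReal.ofReal_one]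
  have hq_key : ∀ (a b : Fin d) (x : Fin d → ℝ),
      ((d : ℝ) / (x ⬝ᵥ (Si *ᵥ x)) * (x a * x b)) * ((x ⬝ᵥ (Si *ᵥ x)) / T)
        = ((d : ℝ) / T) * (x a * x b) := by
    intro a b x
    by_cases hx : x ⬝ᵥ (Si *ᵥ x) = 0
    · have hx0 := hl_zero x hx
      rw [hx]
      simp [hx0]
    · field_simp
  have hq_int : ∀ a b : Fin d,
      Integrable (fun x => (d : ℝ) / (x ⬝ᵥ (Si *ᵥ x)) * (x a * x b)) ν := by
    intro a b
    rw [hν, integrable_withDensity_iff hρ_meas hρ_lt_top]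
    have heq : (fun x => ((d : ℝ) / (x ⬝ᵥ (Si *ᵥ x)) * (x a * x b)) *
        (ENNReal.ofReal ((x ⬝ᵥ (Si *ᵥ x)) / T)).toReal)
        = fun x => ((d : ℝ) / T) * (x a * x b) := by
      funext x
      rw [ENNReal.toReal_ofReal (div_nonneg (hl_nonneg x) hT_pos.le), hq_key]
    rw [heq]
    exact (hint a b).const_mul _
  have hq_val : ∀ a b : Fin d,
      ∫ x, (d : ℝ) / (x ⬝ᵥ (Si *ᵥ x)) * (x a * x b) ∂ν = ((d : ℝ) / T) * Sg a b := by
    intro a b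
    rw [hν]
    have hr : (fun x : Fin d → ℝ => ENNReal.ofReal ((x ⬝ᵥ (Si *ᵥ x)) / T))
        = fun x => ((Real.toNNReal ((x ⬝ᵥ (Si *ᵥ x)) / T) : NNReal) : ENNReal) := rfl
    rw [hr]
    rw [integral_withDensity_eq_integral_smul (μ := μ)
      (f := fun x => Real.toNNReal ((x ⬝ᵥ (Si *ᵥ x)) / T))
      (measurable_real_toNNReal.comp (hl_meas.div_const T))
      (fun x => (d : ℝ) / (x ⬝ᵥ (Si *ᵥ x)) * (x a * x b))]
    have heq : (fun x => Real.toNNReal ((x ⬝ᵥ (Si *ᵥ x)) / T) •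
        ((d : ℝ) / (x ⬝ᵥ (Si *ᵥ x)) * (x a * x b)))
        = fun x => ((d : ℝ) / T) * (x a * x b) := by
      funext x
      rw [NNReal.smul_def, smul_eq_mul,
        Real.coe_toNNReal _ (div_nonneg (hl_nonneg x) hT_pos.le), mul_comm, hq_key]
    rw [heq, integral_const_mul, ← hSg_apply]
  have hB_apply : ∀ (w : Fin t → Fin d → ℝ) (a b : Fin d),
      (∑ i : Fin t, ((d : ℝ) / (w i ⬝ᵥ (Si *ᵥ w i))) • vecMulVec (w i) (w i)) a b
        = ∑ i : Fin t, (d : ℝ) / (w i ⬝ᵥ (Si *ᵥ w i)) * (w i a * w i b) := by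
    intro w a b
    simp [Matrix.sum_apply, Matrix.vecMulVec_apply, mul_assoc]
  set S : Finset (Fin d → Fin t) := Finset.univ.filter (fun f => Function.Injective f) with hS
  have hpt : ∀ w : Fin t → Fin d → ℝ,
      ((((1 : ℝ) / t) • ∑ i : Fin t, ((d : ℝ) / (w i ⬝ᵥ (Si *ᵥ w i))) •
          vecMulVec (w i) (w i)) * Si).det
        = ((1 : ℝ) / t) ^ d * Si.det *
          ∑ f ∈ S, ∑ σ : Equiv.Perm (Fin d), ((Equiv.Perm.sign σ : ℤ) : ℝ) *
            ∏ j : Fin d, (d : ℝ) / (w (f j) ⬝ᵥ (Si *ᵥ w (f j))) * (w (f j) (σ j) * w (f j) j) := by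
    intro w
    rw [Matrix.det_mul, Matrix.det_smul, Fintype.card_fin]
    have hdetB : (∑ i : Fin t, ((d : ℝ) / (w i ⬝ᵥ (Si *ᵥ w i))) • vecMulVec (w i) (w i)).det
        = ∑ f ∈ S, ∑ σ : Equiv.Perm (Fin d), ((Equiv.Perm.sign σ : ℤ) : ℝ) *
          ∏ j : Fin d, (d : ℝ) / (w (f j) ⬝ᵥ (Si *ᵥ w (f j))) * (w (f j) (σ j) * w (f j) j) := by
      rw [Matrix.det_apply']
      have h1 : ∀ σ : Equiv.Perm (Fin d),
          (∏ j : Fin d, (∑ i : Fin t, ((d : ℝ) / (w i ⬝ᵥ (Si *ᵥ w i))) •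
              vecMulVec (w i) (w i)) (σ j) j)
          = ∑ f : Fin d → Fin t, ∏ j : Fin d,
              (d : ℝ) / (w (f j) ⬝ᵥ (Si *ᵥ w (f j))) * (w (f j) (σ j) * w (f j) j) := by
        intro σ
        rw [Finset.prod_congr rfl fun j _ => hB_apply w (σ j) j, Finset.prod_univ_sum]
        rw [Fintype.piFinset_univ]
      calc (∑ σ : Equiv.Perm (Fin d), ((Equiv.Perm.sign σ : ℤ) : ℝ) *
              ∏ j : Fin d, (∑ i : Fin t, ((d : ℝ) / (w i ⬝ᵥ (Si *ᵥ w i))) •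
                vecMulVec (w i) (w i)) (σ j) j)
          = ∑ σ : Equiv.Perm (Fin d), ∑ f : Fin d → Fin t,
              ((Equiv.Perm.sign σ : ℤ) : ℝ) * ∏ j : Fin d,
                (d : ℝ) / (w (f j) ⬝ᵥ (Si *ᵥ w (f j))) * (w (f j) (σ j) * w (f j) j) := by
            refine Finset.sum_congr rfl fun σ _ => ?_
            rw [h1 σ, Finset.mul_sum]
        _ = ∑ f : Fin d → Fin t, ∑ σ : Equiv.Perm (Fin d),
              ((Equiv.Perm.sign σ : ℤ) : ℝ) * ∏ j : Fin d,
                (d : ℝ) / (w (f j) ⬝ᵥ (Si *ᵥ w (f j))) * (w (f j) (σ j) * w (f j) j) :=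
            Finset.sum_comm
        _ = ∑ f ∈ S, ∑ σ : Equiv.Perm (Fin d),
              ((Equiv.Perm.sign σ : ℤ) : ℝ) * ∏ j : Fin d,
                (d : ℝ) / (w (f j) ⬝ᵥ (Si *ᵥ w (f j))) * (w (f j) (σ j) * w (f j) j) := by
            refine (Finset.sum_subset (Finset.subset_univ S) ?_).symm
            intro f _ hfS
            have hfinj : ¬ Function.Injective f := by
              simpa [hS, Finset.mem_filter] using hfS
            obtain ⟨j1, j2, hfj, hne⟩ := Function.not_injective_iff.mp hfinj
            have hsplit : ∀ σ : Equiv.Perm (Fin d),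
                (∏ j : Fin d, (d : ℝ) / (w (f j) ⬝ᵥ (Si *ᵥ w (f j))) *
                  (w (f j) (σ j) * w (f j) j))
                = (∏ j : Fin d, (d : ℝ) / (w (f j) ⬝ᵥ (Si *ᵥ w (f j))) * w (f j) j) *
                  ∏ j : Fin d, (Matrix.of fun (a : Fin d) (j' : Fin d) => w (f j') a) (σ j) j := by
              intro σ
              rw [← Finset.prod_mul_distrib]
              exact Finset.prod_congr rfl fun j _ => by rw [Matrix.of_apply]; ring
            calc (∑ σ : Equiv.Perm (Fin d), ((Equiv.Perm.sign σ : ℤ) : ℝ) *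
                    ∏ j : Fin d, (d : ℝ) / (w (f j) ⬝ᵥ (Si *ᵥ w (f j))) *
                      (w (f j) (σ j) * w (f j) j))
                = (∏ j : Fin d, (d : ℝ) / (w (f j) ⬝ᵥ (Si *ᵥ w (f j))) * w (f j) j) *
                  ∑ σ : Equiv.Perm (Fin d), ((Equiv.Perm.sign σ : ℤ) : ℝ) *
                    ∏ j : Fin d, (Matrix.of fun (a : Fin d) (j' : Fin d) => w (f j') a) (σ j) j := by
                  rw [Finset.mul_sum]
                  exact Finset.sum_congr rfl fun σ _ => by rw [hsplit σ]; ring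
              _ = (∏ j : Fin d, (d : ℝ) / (w (f j) ⬝ᵥ (Si *ᵥ w (f j))) * w (f j) j) *
                  (Matrix.of fun (a : Fin d) (j' : Fin d) => w (f j') a).det := by
                  rw [Matrix.det_apply']
              _ = 0 := by
                  rw [Matrix.det_zero_of_column_eq hne fun k => by
                    show w (f j1) k = w (f j2) k
                    rw [hfj], mul_zero]
    rw [hdetB]
    ring
  have hterm : ∀ f ∈ S, ∀ σ : Equiv.Perm (Fin d),
      Integrable (fun w : Fin t → Fin d → ℝ =>
        ∏ j : Fin d, (d : ℝ) / (w (f j) ⬝ᵥ (Si *ᵥ w (f j))) * (w (f j) (σ j) * w (f j) j))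
        (Measure.pi fun _ : Fin t => ν) ∧
      (∫ w : Fin t → Fin d → ℝ,
        (∏ j : Fin d, (d : ℝ) / (w (f j) ⬝ᵥ (Si *ᵥ w (f j))) * (w (f j) (σ j) * w (f j) j))
        ∂(Measure.pi fun _ : Fin t => ν))
        = ∏ j : Fin d, ((d : ℝ) / T) * Sg (σ j) j := by
    intro f hfS σ
    have hfinj : Function.Injective f := by simpa [hS, Finset.mem_filter] using hfS
    set G : Fin t → (Fin d → ℝ) → ℝ := fun i x =>
      ∏ j ∈ Finset.univ.filter (fun j : Fin d => f j = i),
        (d : ℝ) / (x ⬝ᵥ (Si *ᵥ x)) * (x (σ j) * x j) with hG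
    have hGpt : ∀ w : Fin t → Fin d → ℝ,
        (∏ j : Fin d, (d : ℝ) / (w (f j) ⬝ᵥ (Si *ᵥ w (f j))) * (w (f j) (σ j) * w (f j) j))
        = ∏ i : Fin t, G i (w i) := by
      intro w
      rw [← Finset.prod_fiberwise_of_maps_to (fun j _ => Finset.mem_univ (f j))
        (fun j => (d : ℝ) / (w (f j) ⬝ᵥ (Si *ᵥ w (f j))) * (w (f j) (σ j) * w (f j) j))]
      refine Finset.prod_congr rfl fun i _ => ?_
      simp only [hG]
      refine Finset.prod_congr rfl fun j hj => ?_
      rw [(Finset.mem_filter.mp hj).2]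
    have hfib : ∀ i : Fin t, Finset.univ.filter (fun j : Fin d => f j = i) = ∅ ∨
        ∃ j, f j = i ∧ Finset.univ.filter (fun j' : Fin d => f j' = i) = {j} := by
      intro i
      by_cases hi : ∃ j, f j = i
      · obtain ⟨j, hj⟩ := hi
        refine Or.inr ⟨j, hj, ?_⟩
        ext j'
        simp only [Finset.mem_filter, Finset.mem_univ, true_and, Finset.mem_singleton]
        exact ⟨fun h => hfinj (h.trans hj.symm), fun h => h ▸ hj⟩
      · refine Or.inl ?_
        ext j'
        simp only [Finset.mem_filter, Finset.mem_univ, true_and, Finset.notMem_empty,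
          iff_false]
        exact fun h => hi ⟨j', h⟩
    have hGint : ∀ i, Integrable (G i) ν := by
      intro i
      rcases hfib i with h | ⟨j, _, h⟩
      · have hone : G i = fun _ => 1 := by
          funext x; simp only [hG, h, Finset.prod_empty]
        rw [hone]; exact integrable_const 1
      · have hqi : G i = fun x => (d : ℝ) / (x ⬝ᵥ (Si *ᵥ x)) * (x (σ j) * x j) := by
          funext x; simp only [hG, h, Finset.prod_singleton]
        rw [hqi]; exact hq_int _ _
    have hGval : ∀ i, ∫ x, G i x ∂ν
        = ∏ j ∈ Finset.univ.filter (fun j : Fin d => f j = i), ((d : ℝ) / T) * Sg (σ j) j := by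
      intro i
      rcases hfib i with h | ⟨j, _, h⟩
      · simp only [hG, h, Finset.prod_empty]
        simp
      · simp only [hG, h, Finset.prod_singleton]
        exact hq_val _ _
    constructor
    · exact (aux_integrable_pi_prod ν G hGint).congr
        (Filter.Eventually.of_forall fun w => (hGpt w).symm)
    · calc (∫ w : Fin t → Fin d → ℝ,
            (∏ j : Fin d, (d : ℝ) / (w (f j) ⬝ᵥ (Si *ᵥ w (f j))) *
              (w (f j) (σ j) * w (f j) j))
            ∂(Measure.pi fun _ : Fin t => ν))
          = ∫ w : Fin t → Fin d → ℝ, (∏ i : Fin t, G i (w i))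
              ∂(Measure.pi fun _ : Fin t => ν) :=
            integral_congr_ae (Filter.Eventually.of_forall hGpt)
        _ = ∏ i : Fin t, ∫ x, G i x ∂ν := aux_integral_pi_prod ν G
        _ = ∏ i : Fin t, ∏ j ∈ Finset.univ.filter (fun j : Fin d => f j = i),
              ((d : ℝ) / T) * Sg (σ j) j :=
            Finset.prod_congr rfl fun i _ => hGval i
        _ = ∏ j : Fin d, ((d : ℝ) / T) * Sg (σ j) j :=
            Finset.prod_fiberwise_of_maps_to (fun j _ => Finset.mem_univ (f j)) _
  have hcardS : S.card = t.descFactorial d := by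
    have h1 : S.card = Fintype.card {f : Fin d → Fin t // Function.Injective f} := by
      rw [hS]; exact (Fintype.card_subtype _).symm
    rw [h1, Fintype.card_congr (Equiv.subtypeInjectiveEquivEmbedding (Fin d) (Fin t)),
      Fintype.card_embedding_eq, Fintype.card_fin, Fintype.card_fin]
  have hRHS : (∫ w : Fin t → Fin d → ℝ,
      ((((1 : ℝ) / t) • ∑ i, ((d : ℝ) / (w i ⬝ᵥ (Si *ᵥ w i))) • vecMulVec (w i) (w i)) * Si).det
      ∂(Measure.pi fun _ : Fin t => ν))
      = ((1 : ℝ) / t) ^ d * Si.det *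
        ((t.descFactorial d : ℝ) * (((d : ℝ) / T) ^ d * Sg.det)) := by
    rw [integral_congr_ae (Filter.Eventually.of_forall hpt)]
    rw [integral_const_mul]
    rw [integral_finset_sum S (fun f hf => integrable_finset_sum _
      (fun σ _ => ((hterm f hf σ).1.const_mul _)))]
    have hfs : ∀ f ∈ S, (∫ w : Fin t → Fin d → ℝ,
        ∑ σ : Equiv.Perm (Fin d), ((Equiv.Perm.sign σ : ℤ) : ℝ) *
          ∏ j : Fin d, (d : ℝ) / (w (f j) ⬝ᵥ (Si *ᵥ w (f j))) * (w (f j) (σ j) * w (f j) j)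
        ∂(Measure.pi fun _ : Fin t => ν)) = ((d : ℝ) / T) ^ d * Sg.det := by
      intro f hf
      rw [integral_finset_sum _ (fun σ _ => (hterm f hf σ).1.const_mul _)]
      rw [Finset.sum_congr rfl (fun σ _ => by
        rw [integral_const_mul, (hterm f hf σ).2])]
      have hdet2 : (((d : ℝ) / T) • Sg).det = ∑ σ : Equiv.Perm (Fin d),
          ((Equiv.Perm.sign σ : ℤ) : ℝ) * ∏ j : Fin d, ((d : ℝ) / T) * Sg (σ j) j := by
        rw [Matrix.det_apply']
        simp only [Matrix.smul_apply, smul_eq_mul]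
      rw [← hdet2, Matrix.det_smul, Fintype.card_fin]
    rw [Finset.sum_congr rfl hfs, Finset.sum_const, hcardS, nsmul_eq_mul]
  rw [hRHS]
  have ht_pos : (0 : ℝ) < t := by exact_mod_cast lt_of_lt_of_le hd hdt
  have hd_pos : (0 : ℝ) < d := by exact_mod_cast hd
  have hSi_det_pos : 0 < Si.det := hSi.det_pos
  have hkey : (1 - (d : ℝ) ^ 2 / t) ≤ (t.descFactorial d : ℝ) * ((1 : ℝ) / t) ^ d := by
    have hcast : (t.descFactorial d : ℝ) = ∏ k ∈ Finset.range d, ((t : ℝ) - k) := by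
      rw [Nat.descFactorial_eq_prod_range, Nat.cast_prod]
      refine Finset.prod_congr rfl fun k hk => ?_
      have hk' : k ≤ t := le_trans (Nat.le_of_lt (Finset.mem_range.mp hk)) hdt
      exact Nat.cast_sub hk'
    have hprod : (t.descFactorial d : ℝ) * ((1 : ℝ) / t) ^ d
        = ∏ k ∈ Finset.range d, (1 - (k : ℝ) / t) := by
      calc (t.descFactorial d : ℝ) * ((1 : ℝ) / t) ^ d
          = ∏ k ∈ Finset.range d, (((t : ℝ) - k) * (1 / t)) := by
            rw [Finset.prod_mul_distrib, hcast, Finset.prod_const, Finset.card_range]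
        _ = ∏ k ∈ Finset.range d, (1 - (k : ℝ) / t) := by
            refine Finset.prod_congr rfl fun k _ => ?_
            field_simp
    rw [hprod]
    have hb := aux_bernoulli (Finset.range d) (fun k => (k : ℝ) / t)
      (fun k _ => div_nonneg (Nat.cast_nonneg k) ht_pos.le)
      (fun k hk => by
        rw [div_le_one ht_pos]
        exact_mod_cast le_trans (Nat.le_of_lt (Finset.mem_range.mp hk)) hdt)
    refine le_trans ?_ hb
    have hsum : ∑ k ∈ Finset.range d, (k : ℝ) / t ≤ (d : ℝ) ^ 2 / t := by
      rw [← Finset.sum_div]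
      have hsum2 : ∑ k ∈ Finset.range d, (k : ℝ) ≤ (d : ℝ) ^ 2 := by
        calc ∑ k ∈ Finset.range d, (k : ℝ) ≤ ∑ _k ∈ Finset.range d, (d : ℝ) :=
            Finset.sum_le_sum fun k hk => by
              exact_mod_cast Nat.le_of_lt (Finset.mem_range.mp hk)
          _ = (d : ℝ) * d := by rw [Finset.sum_const, Finset.card_range, nsmul_eq_mul]
          _ = (d : ℝ) ^ 2 := by ring
      gcongr
    linarith
  have hP : 0 < Sg.det * Si.det * ((d : ℝ) / T) ^ d :=
    mul_pos (mul_pos hSg_det_pos hSi_det_pos) (pow_pos (div_pos hd_pos hT_pos) d)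
  have hgoal_lhs : (1 - (d : ℝ) ^ 2 / t) * (Sg * Si).det / (T / (d : ℝ)) ^ d
      = (1 - (d : ℝ) ^ 2 / t) * (Sg.det * Si.det * ((d : ℝ) / T) ^ d) := by
    rw [Matrix.det_mul, show (T / (d : ℝ)) = ((d : ℝ) / T)⁻¹ by rw [inv_div], inv_pow, div_inv_eq_mul]
    ring
  have hgoal_rhs : ((1 : ℝ) / t) ^ d * Si.det *
      ((t.descFactorial d : ℝ) * (((d : ℝ) / T) ^ d * Sg.det))
      = ((t.descFactorial d : ℝ) * ((1 : ℝ) / t) ^ d) *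
        (Sg.det * Si.det * ((d : ℝ) / T) ^ d) := by ring
  rw [hgoal_lhs, hgoal_rhs]
  exact mul_le_mul_of_nonneg_right hkey hP.le
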